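/- Let 1 < p < ∞ and let r_p ∈ (0,1) satisfy 1 - r_p - r_p^p = 0. Then for all x ∈ (0, r_p), (1 - x^p)^p > 1 - x. -/

import Mathlib

open Set

/-- For `1 < p`, if `r_p ∈ (0,1)` satisfies `1 - r_p - r_p^p = 0`, then for all
`x ∈ (0, r_p)` we have `(1 - x^p)^p > 1 - x`. -/
theorem stmt2 (p : ℝ) (hp : 1 < p) (rp : ℝ) (hrp : rp ∈ Set.Ioo (0 : ℝ) 1)
    (hroot : 1 - rp - rp ^ p = 0) :
    ∀ x ∈ Set.Ioo (0 : ℝ) rp, (1 - x ^ p) ^ p > 1 - x := by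
  obtain ⟨hrp0, hrp1⟩ := hrp
  have hp0 : (0:ℝ) < p := lt_trans one_pos hp
  have hp1 : (0:ℝ) < p - 1 := sub_pos.2 hp
  set F : ℝ → ℝ := fun x => (1 - x ^ p) ^ p + x - 1 with hFdef
  set m : ℝ → ℝ := fun x => x * (1 - x ^ p) with hmdef
  set F' : ℝ → ℝ := fun x => -(p * x ^ (p - 1)) * p * (1 - x ^ p) ^ (p - 1) + 1 with hF'def
  -- basic bound
  have hxp1 : ∀ x : ℝ, 0 ≤ x → x < 1 → x ^ p < 1 := fun x h0 h1 => Real.rpow_lt_one h0 h1 hp0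
  have hmpos : ∀ x : ℝ, 0 < x → x < 1 → 0 < m x := by
    intro x h0 h1
    have := hxp1 x h0.le h1
    have : 0 < 1 - x ^ p := by linarith
    exact mul_pos h0 this
  -- derivative of F
  have hderiv : ∀ x ∈ Ioo (0:ℝ) 1, HasDerivAt F (F' x) x := by
    intro x hx
    have hxp : x ^ p < 1 := hxp1 x hx.1.le hx.2
    have h1 : HasDerivAt (fun y : ℝ => 1 - y ^ p) (-(p * x ^ (p-1))) x :=
      (Real.hasDerivAt_rpow_const (Or.inl hx.1.ne')).const_sub 1
    have h2 : HasDerivAt (fun y : ℝ => (1 - y ^ p) ^ p)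
        (-(p * x ^ (p-1)) * p * (1 - x ^ p) ^ (p - 1)) x :=
      h1.rpow_const (Or.inl (by linarith))
    have h3 := (h2.add (hasDerivAt_id x)).sub_const 1
    exact h3
  -- continuity of F
  have contF : Continuous F := by
    apply Continuous.sub
    · exact ((Real.continuous_rpow_const hp0.le).comp
        (continuous_const.sub (Real.continuous_rpow_const hp0.le))).add continuous_id
    · exact continuous_const
  -- values of F
  have hF0 : F 0 = 0 := by
    simp [hFdef, Real.zero_rpow hp0.ne', Real.one_rpow]
  have hrppow : rp ^ p = 1 - rp := by linarith
  have hFrp : F rp = 0 := by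
    simp only [hFdef, hrppow]
    have : (1:ℝ) - (1 - rp) = rp := by ring
    rw [this, hrppow]
    ring
  have hF1 : F 1 = 0 := by
    simp [hFdef, Real.one_rpow, Real.zero_rpow hp0.ne']
  -- Rolle on [0, rp] and [rp, 1]
  obtain ⟨ξ₁, hξ₁mem, hξ₁⟩ := exists_hasDerivAt_eq_zero hrp0 contF.continuousOn
    (hF0.trans hFrp.symm) (fun x hx => hderiv x ⟨hx.1, hx.2.trans hrp1⟩)
  obtain ⟨ξ₂, hξ₂mem, hξ₂⟩ := exists_hasDerivAt_eq_zero hrp1 contF.continuousOn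
    (hFrp.trans hF1.symm) (fun x hx => hderiv x ⟨lt_trans hrp0 hx.1, hx.2⟩)
  have hξ₁1 : ξ₁ < 1 := hξ₁mem.2.trans hrp1
  have hξ₂0 : 0 < ξ₂ := lt_trans hrp0 hξ₂mem.1
  -- F' in terms of m
  have hF'eq : ∀ x : ℝ, 0 < x → x < 1 → F' x = 1 - p^2 * (m x) ^ (p-1) := by
    intro x h0 h1
    have hxp : x ^ p < 1 := hxp1 x h0.le h1
    have hmr : (m x) ^ (p-1) = x ^ (p-1) * (1 - x ^ p) ^ (p-1) :=
      Real.mul_rpow h0.le (by linarith)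
    simp only [hF'def, hmr]
    ring
  -- critical point equation
  have hcrit : ∀ ξ : ℝ, 0 < ξ → ξ < 1 → F' ξ = 0 → p^2 * (m ξ) ^ (p-1) = 1 := by
    intro ξ h0 h1 h
    rw [hF'eq ξ h0 h1] at h
    linarith
  -- m ξ₁ = m ξ₂
  have hc₁ := hcrit ξ₁ hξ₁mem.1 hξ₁1 hξ₁
  have hc₂ := hcrit ξ₂ hξ₂0 hξ₂mem.2 hξ₂
  have hmeq : m ξ₁ = m ξ₂ := by
    have hpow : (m ξ₁) ^ (p-1) = (m ξ₂) ^ (p-1) := by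
      have hp2 : (0:ℝ) < p^2 := by positivity
      field_simp at hc₁ hc₂
      nlinarith
    exact Real.rpow_left_injOn hp1.ne'
      (le_of_lt (hmpos ξ₁ hξ₁mem.1 hξ₁1)) (le_of_lt (hmpos ξ₂ hξ₂0 hξ₂mem.2)) hpow
  -- sign of F' from comparison with m ξ₁
  have hsign : ∀ y : ℝ, 0 < y → y < 1 →
      (m y < m ξ₁ → 0 < F' y) ∧ (m ξ₁ < m y → F' y < 0) := by
    intro y h0 h1
    have hmy : 0 < m y := hmpos y h0 h1
    have hm1 : 0 < m ξ₁ := hmpos ξ₁ hξ₁mem.1 hξ₁1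
    rw [hF'eq y h0 h1]
    constructor
    · intro h
      have h2' := Real.rpow_lt_rpow hmy.le h hp1
      have h3' : p^2 * (m y)^(p-1) < p^2 * (m ξ₁)^(p-1) :=
        mul_lt_mul_of_pos_left h2' (by positivity)
      linarith
    · intro h
      have h2' := Real.rpow_lt_rpow hm1.le h hp1
      have h3' : p^2 * (m ξ₁)^(p-1) < p^2 * (m y)^(p-1) :=
        mul_lt_mul_of_pos_left h2' (by positivity)
      linarith
  -- monotonicity of m : increasing on [0, t0], decreasing on [t0, 1]
  set t0 : ℝ := (p+1)⁻¹ ^ p⁻¹ with ht0def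
  have ht0pos : 0 < t0 := Real.rpow_pos_of_pos (by positivity) _
  have ht0p : t0 ^ p = (p+1)⁻¹ := Real.rpow_inv_rpow (by positivity) hp0.ne'
  have hmderiv : ∀ x : ℝ, 0 < x → HasDerivAt m (1 - (1+p) * x ^ p) x := by
    intro x hx
    have h1 : HasDerivAt (fun y : ℝ => y ^ p) (p * x ^ (p-1)) x :=
      Real.hasDerivAt_rpow_const (Or.inl hx.ne')
    have h2 := (hasDerivAt_id x).mul (h1.const_sub 1)
    have hxx : x * x ^ (p-1) = x ^ p := by
      nth_rewrite 1 [← Real.rpow_one x]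
      rw [← Real.rpow_add hx]
      congr 1
      ring
    refine h2.congr_deriv ?_
    simp only [id_eq, one_mul]
    linear_combination (-p) * hxx
  have contm : Continuous m :=
    continuous_id.mul (continuous_const.sub (Real.continuous_rpow_const hp0.le))
  have hmono : StrictMonoOn m (Icc 0 t0) := by
    apply strictMonoOn_of_deriv_pos (convex_Icc 0 t0) contm.continuousOn
    intro x hx
    rw [interior_Icc] at hx
    have hd := (hmderiv x hx.1).deriv
    rw [hd]
    have : x ^ p < t0 ^ p := Real.rpow_lt_rpow hx.1.le hx.2 hp0
    rw [ht0p] at this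
    have hp1' : (0:ℝ) < p + 1 := by linarith
    rw [inv_eq_one_div, lt_div_iff₀ hp1'] at this
    nlinarith
  have hanti : StrictAntiOn m (Icc t0 1) := by
    apply strictAntiOn_of_deriv_neg (convex_Icc t0 1) contm.continuousOn
    intro x hx
    rw [interior_Icc] at hx
    have hx0 : 0 < x := lt_trans ht0pos hx.1
    have hd := (hmderiv x hx0).deriv
    rw [hd]
    have : t0 ^ p < x ^ p := Real.rpow_lt_rpow ht0pos.le hx.1 hp0
    rw [ht0p] at this
    have hp1' : (0:ℝ) < p + 1 := by linarith
    rw [inv_eq_one_div, div_lt_iff₀ hp1'] at this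
    nlinarith
  -- position of ξ₁, ξ₂ relative to t0
  have hξ₁t0 : ξ₁ ≤ t0 := by
    by_contra h
    push_neg at h
    have h2 : m ξ₂ < m ξ₁ := hanti ⟨h.le, hξ₁1.le⟩
      ⟨(h.trans hξ₁mem.2).le.trans hξ₂mem.1.le, hξ₂mem.2.le⟩
      (hξ₁mem.2.trans hξ₂mem.1)
    rw [hmeq] at h2
    exact lt_irrefl _ h2
  have hξ₂t0 : t0 ≤ ξ₂ := by
    by_contra h
    push_neg at h
    have h2 : m ξ₁ < m ξ₂ := hmono ⟨hξ₁mem.1.le, hξ₁t0⟩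
      ⟨hξ₂0.le, h.le⟩ (hξ₁mem.2.trans hξ₂mem.1)
    rw [hmeq] at h2
    exact lt_irrefl _ h2
  -- F strictly mono on [0, ξ₁]
  have hFmono : StrictMonoOn F (Icc 0 ξ₁) := by
    apply strictMonoOn_of_deriv_pos (convex_Icc 0 ξ₁) contF.continuousOn
    intro y hy
    rw [interior_Icc] at hy
    have hy1 : y < 1 := hy.2.trans hξ₁1
    rw [(hderiv y ⟨hy.1, hy1⟩).deriv]
    apply (hsign y hy.1 hy1).1
    exact hmono ⟨hy.1.le, hy.2.le.trans hξ₁t0⟩ ⟨hξ₁mem.1.le, hξ₁t0⟩ hy.2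
  -- F strictly anti on [ξ₁, ξ₂]
  have hFanti : StrictAntiOn F (Icc ξ₁ ξ₂) := by
    apply strictAntiOn_of_deriv_neg (convex_Icc ξ₁ ξ₂) contF.continuousOn
    intro y hy
    rw [interior_Icc] at hy
    have hy0 : 0 < y := lt_trans hξ₁mem.1 hy.1
    have hy1 : y < 1 := hy.2.trans hξ₂mem.2
    rw [(hderiv y ⟨hy0, hy1⟩).deriv]
    apply (hsign y hy0 hy1).2
    rcases le_or_gt y t0 with hyt | hyt
    · exact hmono ⟨hξ₁mem.1.le, hξ₁t0⟩ ⟨hy0.le, hyt⟩ hy.1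
    · rw [hmeq]
      exact hanti ⟨hyt.le, hy1.le⟩ ⟨hξ₂t0, hξ₂mem.2.le⟩ hy.2
  -- conclude
  intro x hx
  have hFx : 0 < F x := by
    rcases le_or_gt x ξ₁ with hcase | hcase
    · have := hFmono ⟨le_refl 0, hξ₁mem.1.le⟩ ⟨hx.1.le, hcase⟩ hx.1
      rwa [hF0] at this
    · have hxξ₂ : x ≤ ξ₂ := (hx.2.trans hξ₂mem.1).le
      have := hFanti ⟨hcase.le, hxξ₂⟩ ⟨hξ₁mem.2.le, hξ₂mem.1.le⟩ hx.2
      rwa [hFrp] at this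
  simp only [hFdef] at hFx
  linarith
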